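/- arXiv:0908.0560 — 3 statements merged into one kernel-verified Lean document; each statement's English description precedes it below -/
import Mathlib

section
/- For L ≥ 2, the union over j = 0,…,L−1 of the intervals [−2 + 2cos(2πj/L), 2 + 2cos(2πj/L)] equals [−4,4] if L is even, and equals [−2 + 2cos(π(L−1)/L), 4] if L is odd. -/
open Real

lemma cos_ge_aux (L : ℕ) (hL : 2 ≤ L) (hodd : ¬ Even L) (j : ℕ) (hj : j < L) :
    Real.cos (Real.pi * ((L : ℝ) - 1) / L) ≤ Real.cos (2 * Real.pi * j / L) := by
  have hLpos : (0:ℝ) < L := by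
    have : 0 < L := by omega
    exact_mod_cast this
  have hpi := Real.pi_pos
  have hL1 : (1:ℝ) ≤ L := by
    have : 1 ≤ L := by omega
    exact_mod_cast this
  have haπ : Real.pi * ((L:ℝ) - 1) / L ≤ Real.pi := by
    rw [div_le_iff₀ hLpos]; nlinarith
  rcases lt_or_ge (2*j) L with h | h
  · have h2 : (2:ℝ) * j ≤ (L:ℝ) - 1 := by
      have h' : 2*j + 1 ≤ L := h
      have : ((2*j + 1 : ℕ) : ℝ) ≤ (L : ℝ) := by exact_mod_cast h'
      push_cast at this; linarith
    exact Real.cos_le_cos_of_nonneg_of_le_pi (by positivity) haπ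
      (by rw [div_le_div_iff₀ hLpos hLpos]
          nlinarith [mul_nonneg (mul_nonneg hpi.le (sub_nonneg.mpr h2)) hLpos.le])
  · have hne : 2*j ≠ L := by
      intro he; exact hodd ⟨j, by omega⟩
    have h2 : (L:ℝ) + 1 ≤ 2*(j:ℝ) := by
      have h' : L + 1 ≤ 2*j := by omega
      have : ((L + 1 : ℕ) : ℝ) ≤ ((2*j : ℕ) : ℝ) := by exact_mod_cast h'
      push_cast at this; linarith
    have hjL : (j:ℝ) < L := by exact_mod_cast hj
    have hcos : Real.cos (2 * Real.pi * j / L)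
        = Real.cos (2*Real.pi - 2 * Real.pi * j / L) := by
      rw [Real.cos_sub]; simp [Real.cos_two_pi, Real.sin_two_pi]
    rw [hcos]
    apply Real.cos_le_cos_of_nonneg_of_le_pi _ haπ
    · -- 2π - 2πj/L ≤ π(L-1)/L
      rw [sub_le_iff_le_add, div_add_div _ _ (ne_of_gt hLpos) (ne_of_gt hLpos),
        le_div_iff₀ (by positivity)]
      nlinarith [mul_nonneg (mul_nonneg hLpos.le hpi.le) (sub_nonneg.mpr h2)]
    · -- 0 ≤ 2π - 2πj/L
      rw [sub_nonneg, div_le_iff₀ hLpos]; nlinarith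

/-- The union of the shifted intervals I_j = [−2+2cos(2πj/L), 2+2cos(2πj/L)] is
[−4,4] for even L and [−2+2cos(π(L−1)/L), 4] for odd L. -/
theorem union_intervals (L : ℕ) (hL : 2 ≤ L) :
    (⋃ j ∈ Finset.range L,
        Set.Icc (-2 + 2 * Real.cos (2 * Real.pi * j / L))
                (2 + 2 * Real.cos (2 * Real.pi * j / L)))
      = if Even L then Set.Icc (-4 : ℝ) 4
        else Set.Icc (-2 + 2 * Real.cos (Real.pi * ((L : ℝ) - 1) / L)) 4 := by
  have hLpos : (0:ℝ) < L := by
    have : 0 < L := by omega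
    exact_mod_cast this
  have hpi := Real.pi_pos
  ext x
  simp only [Set.mem_iUnion, Finset.mem_range, Set.mem_Icc, exists_prop]
  by_cases hE : Even L
  · simp only [if_pos hE, Set.mem_Icc]
    constructor
    · rintro ⟨j, hj, h1, h2⟩
      have hc1 := Real.neg_one_le_cos (2*Real.pi*j/L)
      have hc2 := Real.cos_le_one (2*Real.pi*j/L)
      constructor <;> nlinarith
    · rintro ⟨h1, h2⟩
      obtain ⟨k, hk⟩ := hE
      have hk1 : 1 ≤ k := by omega
      rcases le_or_gt x 0 with hx | hx
      · refine ⟨k, by omega, ?_⟩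
        have hLk : (L:ℝ) = 2*k := by rw [hk]; push_cast; ring
        have hkpos : (0:ℝ) < k := by
          have : 0 < k := hk1
          exact_mod_cast this
        have hang : 2*Real.pi*(k:ℝ)/L = Real.pi := by
          rw [hLk]; field_simp
        rw [hang, Real.cos_pi]
        constructor <;> linarith
      · refine ⟨0, by omega, ?_⟩
        simp only [Nat.cast_zero, mul_zero, zero_div, Real.cos_zero]
        constructor <;> linarith
  · simp only [if_neg hE, Set.mem_Icc]
    constructor
    · rintro ⟨j, hj, h1, h2⟩
      have hc1 := cos_ge_aux L hL hE j hj
      have hc2 := Real.cos_le_one (2*Real.pi*j/L)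
      constructor <;> nlinarith
    · rintro ⟨h1, h2⟩
      obtain ⟨k, hk⟩ := Nat.not_even_iff_odd.mp hE
      have hk1 : 1 ≤ k := by omega
      rcases le_or_gt x 0 with hx | hx
      · refine ⟨k, by omega, ?_⟩
        have hLk : (L:ℝ) = 2*k + 1 := by rw [hk]; push_cast; ring
        have hang : 2*Real.pi*(k:ℝ)/L = Real.pi * ((L:ℝ) - 1) / L := by
          rw [hLk]; ring_nf
        rw [hang]
        have hc1 := Real.neg_one_le_cos (Real.pi * ((L:ℝ) - 1) / L)
        constructor <;> linarith
      · refine ⟨0, by omega, ?_⟩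
        simp only [Nat.cast_zero, mul_zero, zero_div, Real.cos_zero]
        constructor <;> linarith
end

section
/- Let u_1, u_2 be solutions of the Jacobi equation p_n u(n+1) + p_{n−1} u(n−1) = λ u(n) with p_n ∈ (0,1], satisfying u_1(−1)=0, u_1(0)=1 and u_2(−1)=1, u_2(0)=0. Then for all l ≥ 1, ‖u_1‖_l · ‖u_2‖_l ≥ c·l for some constant c > 0 depending only on inf_n p_n, where ‖u‖_l² = Σ_{n=0}^{[l]} |u(n)|² + (l−[l])|u([l]+1)|². -/
/-- The truncated ℓ² norm squared: ‖u‖_l² = Σ_{n=0}^{⌊l⌋} |u(n)|² + (l−⌊l⌋)|u(⌊l⌋+1)|². -/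
noncomputable def truncNormSq (u : ℤ → ℝ) (l : ℝ) : ℝ :=
  (∑ n ∈ Finset.range (⌊l⌋₊ + 1), (u n) ^ 2) + (l - ⌊l⌋₊) * (u (⌊l⌋₊ + 1)) ^ 2

/-- Cauchy–Schwarz in the absolute-value form. -/
lemma abs_sum_CS (s : Finset ℕ) (f g : ℕ → ℝ) :
    ∑ i ∈ s, |f i| * |g i| ≤ Real.sqrt (∑ i ∈ s, f i ^ 2) * Real.sqrt (∑ i ∈ s, g i ^ 2) := by
  have h := Finset.sum_mul_sq_le_sq_mul_sq s (fun i => |f i|) (fun i => |g i|)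
  simp only [sq_abs] at h
  rw [← Real.sqrt_mul (Finset.sum_nonneg fun i _ => sq_nonneg _)]
  rw [Real.le_sqrt (Finset.sum_nonneg fun i _ => mul_nonneg (abs_nonneg _) (abs_nonneg _))
    (mul_nonneg (Finset.sum_nonneg fun i _ => sq_nonneg _)
      (Finset.sum_nonneg fun i _ => sq_nonneg _))]
  exact h

/-- For the Dirichlet and Neumann solutions of a Jacobi equation with weights
p_n ∈ (0,1] bounded below by ε > 0, the product of truncated norms grows at least
linearly: ‖u₁‖_l ‖u₂‖_l ≥ c l with c depending only on the lower bound ε. -/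
theorem norm_product_lower_bound (ε : ℝ) (hε : 0 < ε) :
    ∃ c : ℝ, 0 < c ∧
      ∀ (p : ℤ → ℝ) (lam : ℝ) (u1 u2 : ℤ → ℝ),
        (∀ n : ℤ, -1 ≤ n → ε ≤ p n ∧ p n ≤ 1) →
        (∀ n : ℤ, 0 ≤ n → p n * u1 (n + 1) + p (n - 1) * u1 (n - 1) = lam * u1 n) →
        (∀ n : ℤ, 0 ≤ n → p n * u2 (n + 1) + p (n - 1) * u2 (n - 1) = lam * u2 n) →
        u1 (-1) = 0 → u1 0 = 1 → u2 (-1) = 1 → u2 0 = 0 →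
        ∀ l : ℝ, 1 ≤ l →
          c * l ≤ Real.sqrt (truncNormSq u1 l) * Real.sqrt (truncNormSq u2 l) := by
  refine ⟨ε / 4, by positivity, ?_⟩
  intro p lam u1 u2 hp h1 h2 hu1m hu10 hu2m hu20 l hl
  set N := ⌊l⌋₊ with hN
  have hN1 : 1 ≤ N := Nat.le_floor (by exact_mod_cast hl)
  have hlN : l < N + 1 := Nat.lt_floor_add_one l
  have hNl : (N : ℝ) ≤ l := Nat.floor_le (by linarith)
  -- Wronskian is constant
  have hW : ∀ k : ℕ, p k * (u1 (k + 1) * u2 k - u1 k * u2 (k + 1)) = p (-1) := by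
    intro k
    induction k with
    | zero =>
        have e1 := h1 0 le_rfl
        have e2 := h2 0 le_rfl
        norm_num [hu1m, hu10, hu2m, hu20] at e1 e2 ⊢
        linarith [e2]
    | succ k ih =>
        have e1 := h1 (k + 1) (by positivity)
        have e2 := h2 (k + 1) (by positivity)
        have hc1 : ((k : ℤ) + 1) - 1 = (k : ℤ) := by ring
        rw [hc1] at e1 e2
        push_cast
        push_cast at ih
        linear_combination u2 ((k : ℤ) + 1) * e1 - u1 ((k : ℤ) + 1) * e2 + ih
  -- pointwise lower bound
  have hpt : ∀ k : ℕ, ε ≤ |u1 (k + 1)| * |u2 k| + |u1 k| * |u2 (k + 1)| := by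
    intro k
    have hpk := hp k (by omega)
    have hpm := hp (-1) (by norm_num)
    have hw := hW k
    set D := u1 (k + 1) * u2 k - u1 k * u2 (k + 1) with hD
    have hεp : ε ≤ p k * D := by rw [hw]; exact hpm.1
    have hDpos : 0 < D := by
      rcases le_or_gt D 0 with h | h
      · nlinarith [hpk.1]
      · exact h
    have hD1 : ε ≤ D := by nlinarith [hpk.2]
    have ha1 : u1 ((k : ℤ) + 1) * u2 k ≤ |u1 ((k : ℤ) + 1)| * |u2 k| := by
      rw [← abs_mul]; exact le_abs_self _
    have ha2 : -(u1 k * u2 ((k : ℤ) + 1)) ≤ |u1 k| * |u2 ((k : ℤ) + 1)| := by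
      rw [← abs_mul]; exact neg_le_abs _
    calc ε ≤ D := hD1
      _ ≤ _ := by rw [hD]; linarith
  -- sum over k < N
  have hsum : (N : ℝ) * ε ≤
      ∑ k ∈ Finset.range N, (|u1 (k + 1)| * |u2 k| + |u1 k| * |u2 (k + 1)|) := by
    calc (N : ℝ) * ε = ∑ _k ∈ Finset.range N, ε := by
          rw [Finset.sum_const, Finset.card_range, nsmul_eq_mul]
      _ ≤ _ := Finset.sum_le_sum fun k _ => hpt k
  rw [Finset.sum_add_distrib] at hsum
  set S1 := ∑ n ∈ Finset.range (N + 1), (u1 n) ^ 2 with hS1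
  set S2 := ∑ n ∈ Finset.range (N + 1), (u2 n) ^ 2 with hS2
  have hS1nn : 0 ≤ S1 := Finset.sum_nonneg fun i _ => sq_nonneg _
  have hS2nn : 0 ≤ S2 := Finset.sum_nonneg fun i _ => sq_nonneg _
  -- shifted sums are bounded by full sums
  have hshift1 : ∑ k ∈ Finset.range N, (u1 ((k : ℤ) + 1)) ^ 2 ≤ S1 := by
    rw [hS1, Finset.sum_range_succ' (fun n => (u1 n) ^ 2) N]
    push_cast
    nlinarith [sq_nonneg (u1 0)]
  have hshift2 : ∑ k ∈ Finset.range N, (u2 ((k : ℤ) + 1)) ^ 2 ≤ S2 := by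
    rw [hS2, Finset.sum_range_succ' (fun n => (u2 n) ^ 2) N]
    push_cast
    nlinarith [sq_nonneg (u2 0)]
  have hsub1 : ∑ k ∈ Finset.range N, (u1 (k : ℤ)) ^ 2 ≤ S1 := by
    rw [hS1, Finset.sum_range_succ]
    nlinarith [sq_nonneg (u1 (N : ℤ))]
  have hsub2 : ∑ k ∈ Finset.range N, (u2 (k : ℤ)) ^ 2 ≤ S2 := by
    rw [hS2, Finset.sum_range_succ]
    nlinarith [sq_nonneg (u2 (N : ℤ))]
  -- Cauchy-Schwarz
  have hCS1 : ∑ k ∈ Finset.range N, |u1 (k + 1)| * |u2 k| ≤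
      Real.sqrt S1 * Real.sqrt S2 := by
    calc ∑ k ∈ Finset.range N, |u1 (k + 1)| * |u2 k|
        ≤ Real.sqrt (∑ k ∈ Finset.range N, (u1 ((k : ℤ) + 1)) ^ 2) *
          Real.sqrt (∑ k ∈ Finset.range N, (u2 (k : ℤ)) ^ 2) :=
          abs_sum_CS (Finset.range N) (fun k => u1 ((k : ℤ) + 1)) (fun k => u2 (k : ℤ))
      _ ≤ _ := mul_le_mul (Real.sqrt_le_sqrt hshift1) (Real.sqrt_le_sqrt hsub2)
          (Real.sqrt_nonneg _) (Real.sqrt_nonneg _)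
  have hCS2 : ∑ k ∈ Finset.range N, |u1 (k : ℤ)| * |u2 ((k : ℤ) + 1)| ≤
      Real.sqrt S1 * Real.sqrt S2 := by
    calc ∑ k ∈ Finset.range N, |u1 (k : ℤ)| * |u2 ((k : ℤ) + 1)|
        ≤ Real.sqrt (∑ k ∈ Finset.range N, (u1 (k : ℤ)) ^ 2) *
          Real.sqrt (∑ k ∈ Finset.range N, (u2 ((k : ℤ) + 1)) ^ 2) :=
          abs_sum_CS (Finset.range N) (fun k => u1 (k : ℤ)) (fun k => u2 ((k : ℤ) + 1))
      _ ≤ _ := mul_le_mul (Real.sqrt_le_sqrt hsub1) (Real.sqrt_le_sqrt hshift2)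
          (Real.sqrt_nonneg _) (Real.sqrt_nonneg _)
  have key : (N : ℝ) * ε ≤ 2 * (Real.sqrt S1 * Real.sqrt S2) := by linarith
  -- truncated norms dominate S1, S2
  have hT1 : S1 ≤ truncNormSq u1 l := by
    unfold truncNormSq
    rw [← hN]
    have : 0 ≤ (l - (N : ℝ)) * (u1 ((N : ℤ) + 1)) ^ 2 :=
      mul_nonneg (by linarith) (sq_nonneg _)
    push_cast at this ⊢
    linarith
  have hT2 : S2 ≤ truncNormSq u2 l := by
    unfold truncNormSq
    rw [← hN]
    have : 0 ≤ (l - (N : ℝ)) * (u2 ((N : ℤ) + 1)) ^ 2 :=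
      mul_nonneg (by linarith) (sq_nonneg _)
    push_cast at this ⊢
    linarith
  have hfin : Real.sqrt S1 * Real.sqrt S2 ≤
      Real.sqrt (truncNormSq u1 l) * Real.sqrt (truncNormSq u2 l) :=
    mul_le_mul (Real.sqrt_le_sqrt hT1) (Real.sqrt_le_sqrt hT2)
      (Real.sqrt_nonneg _) (Real.sqrt_nonneg _)
  have hlN2 : l ≤ 2 * N := by
    have : (1 : ℝ) ≤ N := by exact_mod_cast hN1
    linarith
  calc ε / 4 * l ≤ ε / 4 * (2 * N) := by
        apply mul_le_mul_of_nonneg_left hlN2 (by positivity)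
    _ = (N : ℝ) * ε / 2 := by ring
    _ ≤ Real.sqrt S1 * Real.sqrt S2 := by linarith
    _ ≤ _ := hfin
end

section
/- Let μ be a finite Borel measure on ℝ and α ∈ [0,1]. Let T_∞ = {x : D_μ^α(x) = ∞} with characteristic function χ_α, and set dμ_{αs} = χ_α dμ, dμ_{αc} = (1−χ_α) dμ. Then μ_{αs} is supported on a set of zero α-dimensional Hausdorff measure, and μ_{αc}(S) = 0 for every Borel set S with h^α(S) = 0. -/
open MeasureTheory Filter

/-- The upper α-derivative D_μ^α(x) = limsup_{ε↓0} μ((x−ε,x+ε))/(2ε)^α. -/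
noncomputable def upperDeriv (μ : Measure ℝ) (α : ℝ) (x : ℝ) : ENNReal :=
  limsup (fun ε : ℝ => μ (Set.Ioo (x - ε) (x + ε)) / ENNReal.ofReal ((2 * ε) ^ α))
    (nhdsWithin 0 (Set.Ioi 0))

/-- Points where the measure of small intervals is controlled: for all `ε < 1/(m+1)`,
`μ (x-ε, x+ε) ≤ n (2ε)^α`. -/
def RTset (μ : Measure ℝ) (α : ℝ) (n m : ℕ) : Set ℝ :=
  {x | ∀ ε : ℝ, 0 < ε → ε < 1 / (m + 1) →
    μ (Set.Ioo (x - ε) (x + ε)) ≤ (n : ENNReal) * ENNReal.ofReal ((2 * ε) ^ α)}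

lemma RT_cover (μ : Measure ℝ) (α : ℝ) :
    {x : ℝ | upperDeriv μ α x = ⊤}ᶜ ⊆ ⋃ (n : ℕ) (m : ℕ), RTset μ α n m := by
  intro x hx
  have hx' : upperDeriv μ α x ≠ ⊤ := hx
  obtain ⟨n, hn⟩ := ENNReal.exists_nat_gt hx'
  have hev : ∀ᶠ ε in nhdsWithin (0:ℝ) (Set.Ioi 0),
      μ (Set.Ioo (x - ε) (x + ε)) / ENNReal.ofReal ((2 * ε) ^ α) < n :=
    Filter.eventually_lt_of_limsup_lt hn
  obtain ⟨δ, hδ, hsub⟩ := mem_nhdsGT_iff_exists_Ioo_subset.1 hev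
  obtain ⟨m, hm⟩ := exists_nat_one_div_lt (show (0:ℝ) < δ from hδ)
  refine Set.mem_iUnion.2 ⟨n, Set.mem_iUnion.2 ⟨m, ?_⟩⟩
  intro ε hε0 hεm
  have hεδ : ε ∈ Set.Ioo (0:ℝ) δ := ⟨hε0, lt_trans hεm hm⟩
  have hlt : μ (Set.Ioo (x - ε) (x + ε)) / ENNReal.ofReal ((2 * ε) ^ α) < n := hsub hεδ
  have hb0 : ENNReal.ofReal ((2 * ε) ^ α) ≠ 0 :=
    (ENNReal.ofReal_pos.2 (Real.rpow_pos_of_pos (by linarith) α)).ne'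
  exact le_of_lt ((ENNReal.div_lt_iff (Or.inl hb0) (Or.inl ENNReal.ofReal_ne_top)).1 hlt)

lemma RT_null (μ : Measure ℝ) (α : ℝ) (hα0 : 0 ≤ α) (n m : ℕ) (S : Set ℝ)
    (hS : μH[α] S = 0) : μ (S ∩ RTset μ α n m) = 0 := by
  set A := RTset μ α n m with hA
  set C : ENNReal := (n : ENNReal) * ENNReal.ofReal (2 ^ α) with hCdef
  have hC : C ≠ ⊤ := ENNReal.mul_ne_top (ENNReal.natCast_ne_top n) ENNReal.ofReal_ne_top
  have key : ∀ δ' : ENNReal, 0 < δ' → μ (S ∩ A) ≤ C * δ' := by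
    intro δ' hδ'
    set r₀ : ENNReal := ENNReal.ofReal (1 / (2 * (m + 1))) with hr₀
    have hr₀pos : 0 < r₀ := ENNReal.ofReal_pos.2 (by positivity)
    -- extract a cover witnessing Hausdorff measure zero
    have h0 : (⨅ (t : ℕ → Set ℝ) (_ : S ⊆ ⋃ k, t k) (_ : ∀ k, EMetric.diam (t k) ≤ r₀),
        ∑' k, ⨆ _ : (t k).Nonempty, EMetric.diam (t k) ^ α) = 0 := by
      rw [MeasureTheory.Measure.hausdorffMeasure_apply] at hS
      refine le_antisymm ?_ zero_le
      rw [← hS]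
      exact le_iSup₂ (f := fun (r : ENNReal) (_ : 0 < r) =>
        ⨅ (t : ℕ → Set ℝ) (_ : S ⊆ ⋃ k, t k) (_ : ∀ k, EMetric.diam (t k) ≤ r),
          ∑' k, ⨆ _ : (t k).Nonempty, EMetric.diam (t k) ^ α) r₀ hr₀pos
    have hlt : (⨅ (t : ℕ → Set ℝ) (_ : S ⊆ ⋃ k, t k) (_ : ∀ k, EMetric.diam (t k) ≤ r₀),
        ∑' k, ⨆ _ : (t k).Nonempty, EMetric.diam (t k) ^ α) < δ' := h0 ▸ hδ'
    simp only [iInf_lt_iff] at hlt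
    obtain ⟨t, htS, htd, htsum⟩ := hlt
    have hball : ∀ k, (t k ∩ A).Nonempty → μ (t k) ≤ C * EMetric.diam (t k) ^ α := by
      rintro k ⟨x, hxt, hxA⟩
      have hdne : EMetric.diam (t k) ≠ ⊤ :=
        (lt_of_le_of_lt (htd k) ENNReal.ofReal_lt_top).ne
      set d : ℝ := (EMetric.diam (t k)).toReal with hd
      have hd0 : 0 ≤ d := ENNReal.toReal_nonneg
      have hdm : d < 1 / (m + 1) := by
        have h1 : d ≤ 1 / (2 * (m + 1)) := by
          have := ENNReal.toReal_mono ENNReal.ofReal_ne_top (htd k)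
          rwa [ENNReal.toReal_ofReal (by positivity)] at this
        have h2 : (1:ℝ) / (2 * (m + 1)) < 1 / (m + 1) := by
          rw [div_lt_div_iff₀ (by positivity) (by positivity)]
          nlinarith [Nat.cast_nonneg (α := ℝ) m]
        linarith
      have hsub : ∀ ε : ℝ, d < ε → t k ⊆ Set.Ioo (x - ε) (x + ε) := by
        intro ε hε y hy
        have h1 : edist y x ≤ EMetric.diam (t k) := EMetric.edist_le_diam_of_mem hy hxt
        have h2 : dist y x ≤ d := by
          have := ENNReal.toReal_mono hdne h1
          simpa [dist_edist] using this
        have h3 : |y - x| < ε := lt_of_le_of_lt (by rwa [Real.dist_eq] at h2) hε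
        rw [abs_lt] at h3
        exact ⟨by linarith [h3.1], by linarith [h3.2]⟩
      have hbound : ∀ ε ∈ Set.Ioo d (1 / (m + 1) : ℝ),
          μ (t k) ≤ (n : ENNReal) * ENNReal.ofReal ((2 * ε) ^ α) := by
        intro ε hε
        exact le_trans (measure_mono (hsub ε hε.1))
          (hxA ε (lt_of_le_of_lt hd0 hε.1) hε.2)
      have hc : ContinuousAt (fun ε : ℝ => ENNReal.ofReal ((2 * ε) ^ α)) d := by
        apply ENNReal.continuous_ofReal.continuousAt.comp
        exact (Real.continuousAt_rpow_const (2 * d) α (Or.inr hα0)).comp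
          ((continuous_const.mul continuous_id).continuousAt)
      have hlim : Filter.Tendsto (fun ε : ℝ => (n : ENNReal) * ENNReal.ofReal ((2 * ε) ^ α))
          (nhdsWithin d (Set.Ioi d)) (nhds ((n : ENNReal) * ENNReal.ofReal ((2 * d) ^ α))) := by
        refine Filter.Tendsto.mono_left ?_ nhdsWithin_le_nhds
        exact ENNReal.Tendsto.const_mul hc.tendsto (Or.inr (ENNReal.natCast_ne_top n))
      have hev : ∀ᶠ ε in nhdsWithin d (Set.Ioi d),
          μ (t k) ≤ (n : ENNReal) * ENNReal.ofReal ((2 * ε) ^ α) := by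
        filter_upwards [Ioo_mem_nhdsGT_of_mem ⟨le_refl d, hdm⟩] with ε hε
        exact hbound ε hε
      have hfin : μ (t k) ≤ (n : ENNReal) * ENNReal.ofReal ((2 * d) ^ α) :=
        ge_of_tendsto hlim hev
      have heq : (n : ENNReal) * ENNReal.ofReal ((2 * d) ^ α) = C * EMetric.diam (t k) ^ α := by
        rw [Real.mul_rpow (by norm_num) hd0, ENNReal.ofReal_mul (Real.rpow_nonneg (by norm_num) α),
          hCdef, mul_assoc]
        congr 1
        congr 1
        rw [← ENNReal.ofReal_rpow_of_nonneg hd0 hα0, ENNReal.ofReal_toReal hdne]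
      rwa [heq] at hfin
    calc μ (S ∩ A) ≤ μ (⋃ k, t k ∩ A) := by
          refine measure_mono fun x hx => ?_
          obtain ⟨k, hk⟩ := Set.mem_iUnion.1 (htS hx.1)
          exact Set.mem_iUnion.2 ⟨k, hk, hx.2⟩
      _ ≤ ∑' k, μ (t k ∩ A) := measure_iUnion_le _
      _ ≤ ∑' k, C * (⨆ _ : (t k).Nonempty, EMetric.diam (t k) ^ α) := by
          refine ENNReal.tsum_le_tsum fun k => ?_
          rcases (t k ∩ A).eq_empty_or_nonempty with h | h
          · simp [h]
          · have hne : (t k).Nonempty := h.mono Set.inter_subset_left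
            rw [iSup_pos hne]
            exact le_trans (measure_mono Set.inter_subset_left) (hball k h)
      _ = C * ∑' k, ⨆ _ : (t k).Nonempty, EMetric.diam (t k) ^ α := ENNReal.tsum_mul_left
      _ ≤ C * δ' := mul_le_mul_right htsum.le C
  refine le_antisymm ?_ zero_le
  refine ENNReal.le_of_forall_pos_le_add fun ε' hε' _ => ?_
  rw [zero_add]
  rcases eq_or_ne C 0 with hC0 | hC0
  · have := key 1 one_pos
    rw [hC0, zero_mul] at this
    exact le_trans this zero_le
  · calc μ (S ∩ A) ≤ C * ((ε' : ENNReal) / C) :=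
          key _ (ENNReal.div_pos (by exact_mod_cast hε'.ne') hC)
      _ ≤ (ε' : ENNReal) := ENNReal.mul_div_le

lemma sing_null (μ : Measure ℝ) [IsFiniteMeasure μ] (α : ℝ) (hα0 : 0 ≤ α) :
    μH[α] {x : ℝ | upperDeriv μ α x = ⊤} = 0 := by
  classical
  set T := {x : ℝ | upperDeriv μ α x = ⊤} with hT
  have hrad : ∀ n : ℕ, ∀ x ∈ T, ∃ ε : ℝ, 0 < ε ∧ ε < 1 / (20 * (n + 1)) ∧
      ((n : ENNReal) + 1) * ENNReal.ofReal ((2 * ε) ^ α) ≤ μ (Set.Ioo (x - ε) (x + ε)) := by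
    intro n x hx
    have hx' : upperDeriv μ α x = ⊤ := hx
    rw [upperDeriv, Filter.limsup_eq_iInf_iSup] at hx'
    have hI : Set.Ioo (0:ℝ) (1 / (20 * (n + 1))) ∈ nhdsWithin (0:ℝ) (Set.Ioi 0) :=
      Ioo_mem_nhdsGT_of_mem ⟨le_refl _, by positivity⟩
    have htop : (⨆ ε ∈ Set.Ioo (0:ℝ) (1 / (20 * (n + 1))),
        μ (Set.Ioo (x - ε) (x + ε)) / ENNReal.ofReal ((2 * ε) ^ α)) = ⊤ :=
      top_le_iff.1 (hx' ▸ iInf₂_le _ hI)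
    have hlt : ((n : ENNReal) + 1) < ⨆ ε ∈ Set.Ioo (0:ℝ) (1 / (20 * (n + 1))),
        μ (Set.Ioo (x - ε) (x + ε)) / ENNReal.ofReal ((2 * ε) ^ α) := by
      rw [htop]
      exact lt_of_le_of_ne le_top (by simp)
    simp only [lt_iSup_iff] at hlt
    obtain ⟨ε, hε, hfε⟩ := hlt
    refine ⟨ε, hε.1, hε.2, ?_⟩
    have hb0 : ENNReal.ofReal ((2 * ε) ^ α) ≠ 0 :=
      (ENNReal.ofReal_pos.2 (Real.rpow_pos_of_pos (by linarith [hε.1]) α)).ne'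
    exact ((ENNReal.lt_div_iff_mul_lt (Or.inl hb0) (Or.inl ENNReal.ofReal_ne_top)).1 hfε).le
  choose! r hr0 hrlt hrμ using hrad
  have hvit : ∀ n : ℕ, ∃ u : Set ℝ, u ⊆ T ∧
      (u.PairwiseDisjoint fun a => Metric.closedBall a (r n a)) ∧
      ∀ a ∈ T, ∃ b ∈ u, Metric.closedBall a (r n a) ⊆ Metric.closedBall b (4 * r n b) := by
    intro n
    obtain ⟨u, hu1, hu2, hu3⟩ := Vitali.exists_disjoint_subfamily_covering_enlargement_closedBall
      T (id : ℝ → ℝ) (r n) (1 / (20 * (n + 1))) (fun x hx => (hrlt n x hx).le) 4 (by norm_num)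
    exact ⟨u, hu1, by simpa using hu2, by simpa using hu3⟩
  choose u huT hdisj hcov using hvit
  have hcnt : ∀ n, (u n).Countable := by
    intro n
    refine (hdisj n).countable_of_nonempty_interior fun b hb => ?_
    exact (Metric.nonempty_ball.2 (hr0 n b (huT n hb))).mono
      Metric.ball_subset_interior_closedBall
  haveI : ∀ n, Countable ↥(u n) := fun n => (hcnt n).to_subtype
  -- diameters
  have hrnonneg : ∀ n, ∀ b ∈ u n, 0 ≤ r n b := fun n b hb => (hr0 n b (huT n hb)).le
  have hdiam : ∀ n : ℕ, ∀ b : ↥(u n),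
      EMetric.diam (Metric.closedBall (b : ℝ) (4 * r n b)) ≤ ENNReal.ofReal (1 / (n + 1)) := by
    intro n b
    refine EMetric.diam_le fun y hy z hz => ?_
    rw [edist_dist]
    refine ENNReal.ofReal_le_ofReal ?_
    have h1 : dist y z ≤ dist y (b : ℝ) + dist (b : ℝ) z := dist_triangle _ _ _
    have hy' := Metric.mem_closedBall.1 hy
    have hz' := Metric.mem_closedBall.1 hz
    rw [dist_comm] at hz'
    have hrb := hrlt n b (huT n b.2)
    have hdyz : dist y z ≤ 8 * r n b := by linarith
    have hN : (0:ℝ) < (n:ℝ) + 1 := by positivity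
    rw [le_div_iff₀ hN]
    have h2 : r n b * (20 * ((n:ℝ) + 1)) < 1 := (lt_div_iff₀ (by positivity)).1 hrb
    nlinarith [mul_le_mul_of_nonneg_right hdyz hN.le]
  have hcover : ∀ n : ℕ, T ⊆ ⋃ b : ↥(u n), Metric.closedBall (b : ℝ) (4 * r n b) := by
    intro n x hx
    obtain ⟨b, hb, hsub⟩ := hcov n x hx
    exact Set.mem_iUnion.2 ⟨⟨b, hb⟩, hsub (Metric.mem_closedBall_self (hr0 n x hx).le)⟩
  set D : ENNReal := ENNReal.ofReal (4 ^ α) * μ Set.univ with hD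
  have hDne : D ≠ ⊤ := ENNReal.mul_ne_top ENNReal.ofReal_ne_top (measure_ne_top μ _)
  have hsum : ∀ n : ℕ,
      (∑' b : ↥(u n), EMetric.diam (Metric.closedBall (b : ℝ) (4 * r n b)) ^ α)
        ≤ D / ((n : ENNReal) + 1) := by
    intro n
    have hterm : ∀ b : ↥(u n),
        EMetric.diam (Metric.closedBall (b : ℝ) (4 * r n b)) ^ α ≤
          ENNReal.ofReal (4 ^ α) *
            (μ (Metric.closedBall (b : ℝ) (r n b)) / ((n : ENNReal) + 1)) := by
      intro b
      have hrb0 : 0 < r n b := hr0 n b (huT n b.2)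
      have hd1 : EMetric.diam (Metric.closedBall (b : ℝ) (4 * r n b)) ≤
          ENNReal.ofReal (8 * r n b) := by
        refine EMetric.diam_le fun y hy z hz => ?_
        rw [edist_dist]
        refine ENNReal.ofReal_le_ofReal ?_
        have hy' := Metric.mem_closedBall.1 hy
        have hz' := Metric.mem_closedBall.1 hz
        rw [dist_comm] at hz'
        have := dist_triangle y (b : ℝ) z
        linarith
      have hd2 : EMetric.diam (Metric.closedBall (b : ℝ) (4 * r n b)) ^ α ≤
          ENNReal.ofReal ((8 * r n b) ^ α) := by
        calc EMetric.diam (Metric.closedBall (b : ℝ) (4 * r n b)) ^ α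
            ≤ (ENNReal.ofReal (8 * r n b)) ^ α := ENNReal.rpow_le_rpow hd1 hα0
          _ = ENNReal.ofReal ((8 * r n b) ^ α) :=
              ENNReal.ofReal_rpow_of_nonneg (by linarith) hα0
      have h8 : (8 * r n b) ^ α = 4 ^ α * (2 * r n b) ^ α := by
        rw [← Real.mul_rpow (by norm_num) (by linarith)]
        ring_nf
      have hμb : ENNReal.ofReal ((2 * r n b) ^ α) ≤
          μ (Metric.closedBall (b : ℝ) (r n b)) / ((n : ENNReal) + 1) := by
        rw [ENNReal.le_div_iff_mul_le (Or.inl (by simp)) (Or.inl (by simp))]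
        rw [mul_comm]
        refine le_trans (hrμ n b (huT n b.2)) (measure_mono ?_)
        rw [Real.closedBall_eq_Icc]
        exact Set.Ioo_subset_Icc_self
      calc EMetric.diam (Metric.closedBall (b : ℝ) (4 * r n b)) ^ α
          ≤ ENNReal.ofReal ((8 * r n b) ^ α) := hd2
        _ = ENNReal.ofReal (4 ^ α) * ENNReal.ofReal ((2 * r n b) ^ α) := by
            rw [h8, ENNReal.ofReal_mul (Real.rpow_nonneg (by norm_num) α)]
        _ ≤ ENNReal.ofReal (4 ^ α) *
              (μ (Metric.closedBall (b : ℝ) (r n b)) / ((n : ENNReal) + 1)) :=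
            mul_le_mul_right hμb _
    calc (∑' b : ↥(u n), EMetric.diam (Metric.closedBall (b : ℝ) (4 * r n b)) ^ α)
        ≤ ∑' b : ↥(u n), ENNReal.ofReal (4 ^ α) *
            (μ (Metric.closedBall (b : ℝ) (r n b)) / ((n : ENNReal) + 1)) :=
          ENNReal.tsum_le_tsum hterm
      _ = ENNReal.ofReal (4 ^ α) *
            ((∑' b : ↥(u n), μ (Metric.closedBall (b : ℝ) (r n b))) / ((n : ENNReal) + 1)) := by
          rw [ENNReal.tsum_mul_left]
          congr 1
          simp only [div_eq_mul_inv]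
          rw [ENNReal.tsum_mul_right]
      _ ≤ ENNReal.ofReal (4 ^ α) * (μ Set.univ / ((n : ENNReal) + 1)) := by
          refine mul_le_mul_right (ENNReal.div_le_div_right ?_ _) _
          rw [← measure_biUnion (hcnt n) (hdisj n) (fun b _ => measurableSet_closedBall)]
          exact measure_mono (Set.subset_univ _)
      _ = D / ((n : ENNReal) + 1) := by
          rw [hD, div_eq_mul_inv, div_eq_mul_inv, mul_assoc]
  have htend : Filter.Tendsto (fun n : ℕ => D / ((n : ENNReal) + 1)) atTop (nhds 0) := by
    have h1 : Filter.Tendsto (fun n : ℕ => ((n : ENNReal) + 1)⁻¹) atTop (nhds 0) := by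
      have := ENNReal.tendsto_inv_nat_nhds_zero.comp (Filter.tendsto_add_atTop_nat 1)
      simpa [Function.comp_def, Nat.cast_add] using this
    simp only [div_eq_mul_inv]
    have := ENNReal.Tendsto.const_mul h1 (Or.inr hDne)
    simpa using this
  have hle := MeasureTheory.Measure.hausdorffMeasure_le_liminf_tsum (ι := fun n => ↥(u n)) α T
    (fun n : ℕ => ENNReal.ofReal (1 / (n + 1)))
    (by
      have h0 : Filter.Tendsto (fun n : ℕ => (1:ℝ) / (n + 1)) atTop (nhds 0) :=
        tendsto_one_div_add_atTop_nhds_zero_nat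
      have := ENNReal.tendsto_ofReal h0
      simpa using this)
    (fun n b => Metric.closedBall (b : ℝ) (4 * r n b))
    (Filter.Eventually.of_forall hdiam)
    (Filter.Eventually.of_forall hcover)
  refine le_antisymm ?_ zero_le
  calc μH[α] T ≤ liminf (fun n : ℕ =>
        ∑' b : ↥(u n), EMetric.diam (Metric.closedBall (b : ℝ) (4 * r n b)) ^ α) atTop := hle
    _ ≤ liminf (fun n : ℕ => D / ((n : ENNReal) + 1)) atTop :=
        liminf_le_liminf (Filter.Eventually.of_forall hsum)
    _ = 0 := htend.liminf_eq

/-- Rodgers–Taylor decomposition: with T_∞ = {x : D_μ^α(x) = ∞}, the restriction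
μ_{αs} = μ⌞T_∞ is α-singular (supported on a set of zero h^α measure) and
μ_{αc} = μ⌞T_∞ᶜ is α-continuous (vanishes on every Borel set of zero h^α measure). -/
theorem rodgers_taylor (μ : Measure ℝ) [IsFiniteMeasure μ]
    (α : ℝ) (hα0 : 0 ≤ α) (hα1 : α ≤ 1) :
    (∃ S : Set ℝ, μH[α] S = 0 ∧ μ.restrict {x | upperDeriv μ α x = ⊤} Sᶜ = 0) ∧
    (∀ S : Set ℝ, MeasurableSet S → μH[α] S = 0 →
      μ.restrict {x | upperDeriv μ α x = ⊤}ᶜ S = 0) := by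
  constructor
  · obtain ⟨S, hTS, hSm, hS0⟩ := exists_measurable_superset_of_null (sing_null μ α hα0)
    refine ⟨S, hS0, ?_⟩
    rw [Measure.restrict_apply hSm.compl]
    exact measure_mono_null (fun x hx => (hx.1 (hTS hx.2)).elim) measure_empty
  · intro S hSm hS0
    rw [Measure.restrict_apply hSm]
    have hsub : S ∩ {x : ℝ | upperDeriv μ α x = ⊤}ᶜ ⊆
        ⋃ (n : ℕ) (m : ℕ), S ∩ RTset μ α n m := by
      intro x hx
      obtain ⟨n, hn⟩ := Set.mem_iUnion.1 (RT_cover μ α hx.2)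
      obtain ⟨m, hm⟩ := Set.mem_iUnion.1 hn
      exact Set.mem_iUnion.2 ⟨n, Set.mem_iUnion.2 ⟨m, hx.1, hm⟩⟩
    exact measure_mono_null hsub (measure_iUnion_null fun n =>
      measure_iUnion_null fun m => RT_null μ α hα0 n m S hS0)
end
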